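/- arXiv:2411.18464 — 2 statements merged into one kernel-verified Lean document; each statement's English description precedes it below -/
import Mathlib

section
/- The natural density of relatively prime triples of positive integers equals 1/ζ(3): as N → ∞, the number of triples (a,b,c) with 1 ≤ a,b,c ≤ N and gcd(a,b,c) = 1, divided by N³, converges to ζ(3)^{-1} (the reciprocal of Apéry's constant). -/
open Filter Finset ArithmeticFunction

private lemma sum_moebius_ite (n : ℕ) :
    ∑ d ∈ n.divisors, ArithmeticFunction.moebius d = if n = 1 then 1 else 0 := by
  have h : (ArithmeticFunction.moebius * ArithmeticFunction.zeta : ArithmeticFunction ℤ) n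
      = (1 : ArithmeticFunction ℤ) n := by rw [ArithmeticFunction.moebius_mul_coe_zeta]
  rwa [ArithmeticFunction.coe_mul_zeta_apply, ArithmeticFunction.one_apply] at h

private lemma divisors_eq_filter {g N : ℕ} (hg1 : 1 ≤ g) (hgN : g ≤ N) :
    g.divisors = (Icc 1 N).filter (· ∣ g) := by
  ext d
  simp only [Nat.mem_divisors, mem_filter, mem_Icc]
  constructor
  · rintro ⟨hd, -⟩
    have hdpos : 0 < d := Nat.pos_of_dvd_of_pos hd hg1
    exact ⟨⟨hdpos, le_trans (Nat.le_of_dvd hg1 hd) hgN⟩, hd⟩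
  · rintro ⟨-, hd⟩
    exact ⟨hd, by omega⟩

private lemma count_eq (N : ℕ) :
    (((Finset.Icc 1 N ×ˢ Finset.Icc 1 N ×ˢ Finset.Icc 1 N).filter
        (fun t : ℕ × ℕ × ℕ => Nat.gcd t.1 (Nat.gcd t.2.1 t.2.2) = 1)).card : ℤ)
      = ∑ d ∈ Icc 1 N, ArithmeticFunction.moebius d * ((N / d : ℕ) : ℤ) ^ 3 := by
  set B := Finset.Icc 1 N ×ˢ Finset.Icc 1 N ×ˢ Finset.Icc 1 N with hB
  have step1 : ((B.filter (fun t : ℕ × ℕ × ℕ => Nat.gcd t.1 (Nat.gcd t.2.1 t.2.2) = 1)).card : ℤ)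
      = ∑ t ∈ B, ∑ d ∈ Icc 1 N, if d ∣ Nat.gcd t.1 (Nat.gcd t.2.1 t.2.2)
          then ArithmeticFunction.moebius d else 0 := by
    rw [Finset.card_filter]
    push_cast
    refine Finset.sum_congr rfl fun t ht => ?_
    have hmem : t.1 ∈ Icc 1 N ∧ t.2.1 ∈ Icc 1 N ∧ t.2.2 ∈ Icc 1 N := by
      simpa [hB, Finset.mem_product] using ht
    have h1 : 1 ≤ t.1 := (mem_Icc.1 hmem.1).1
    have h1N : t.1 ≤ N := (mem_Icc.1 hmem.1).2
    set g := Nat.gcd t.1 (Nat.gcd t.2.1 t.2.2) with hg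
    have hgpos : 1 ≤ g := Nat.one_le_iff_ne_zero.2 (by
      intro h
      have := Nat.eq_zero_of_gcd_eq_zero_left h
      omega)
    have hgN : g ≤ N := le_trans (Nat.le_of_dvd h1 (Nat.gcd_dvd_left _ _)) h1N
    rw [← Finset.sum_filter, ← divisors_eq_filter hgpos hgN, sum_moebius_ite]
  rw [step1, Finset.sum_comm]
  refine Finset.sum_congr rfl fun d hd => ?_
  rw [← Finset.sum_filter]
  have hfil : B.filter (fun t : ℕ × ℕ × ℕ => d ∣ Nat.gcd t.1 (Nat.gcd t.2.1 t.2.2))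
      = ((Icc 1 N).filter (d ∣ ·)) ×ˢ (((Icc 1 N).filter (d ∣ ·)) ×ˢ ((Icc 1 N).filter (d ∣ ·))) := by
    rw [hB]
    rw [← Finset.filter_product, ← Finset.filter_product]
    apply Finset.filter_congr
    intro t _
    simp only [Nat.dvd_gcd_iff]
  have hcard : ((Icc 1 N).filter (d ∣ ·)).card = N / d := by
    have : Icc 1 N = Ioc 0 N := rfl
    rw [this]
    exact Nat.Ioc_filter_dvd_card_eq_div N d
  rw [hfil, Finset.sum_const, Finset.card_product, Finset.card_product, hcard, nsmul_eq_mul]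
  push_cast
  ring

private lemma div_ratio_le {k : ℕ} (hk : 0 < k) (N : ℕ) :
    ((N / k : ℕ) : ℝ) / N ≤ 1 / k := by
  rcases Nat.eq_zero_or_pos N with rfl | hN
  · simp
  rw [div_le_div_iff₀ (by positivity) (by positivity), one_mul]
  have h : (N / k : ℕ) * k ≤ N := Nat.div_mul_le_self N k
  exact_mod_cast h

private lemma div_ratio_ge {k : ℕ} (hk : 0 < k) {N : ℕ} (hN : 0 < N) :
    1 / (k : ℝ) - 1 / N ≤ ((N / k : ℕ) : ℝ) / N := by
  have key : (N : ℝ) - k ≤ ((N / k : ℕ) : ℝ) * k := by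
    have h : N < (N / k) * k + k := by
      have h1 := Nat.div_add_mod' N k
      have h2 := Nat.mod_lt N hk
      omega
    have : (N : ℝ) < ((N / k : ℕ) : ℝ) * k + k := by exact_mod_cast h
    linarith
  rw [div_sub_div _ _ (by positivity) (by positivity), div_le_div_iff₀ (by positivity) (by positivity)]
  have hkR : (0:ℝ) < k := by exact_mod_cast hk
  have hNR : (0:ℝ) < N := by exact_mod_cast hN
  calc (1 * N - k * 1) * N = ((N:ℝ) - k) * N := by ring
    _ ≤ (((N / k : ℕ) : ℝ) * k) * N := by nlinarith
    _ = ((N / k : ℕ) : ℝ) * (k * N) := by ring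

private lemma tendsto_div_ratio {k : ℕ} (hk : 0 < k) :
    Tendsto (fun N : ℕ => ((N / k : ℕ) : ℝ) / N) atTop (nhds (1 / k)) := by
  have hlow : Tendsto (fun N : ℕ => 1 / (k : ℝ) - 1 / N) atTop (nhds (1 / k - 0)) :=
    (tendsto_const_nhds).sub tendsto_one_div_atTop_nhds_zero_nat
  rw [sub_zero] at hlow
  refine tendsto_of_tendsto_of_tendsto_of_le_of_le' hlow tendsto_const_nhds ?_ ?_
  · filter_upwards [eventually_gt_atTop 0] with N hN
    exact div_ratio_ge hk hN
  · filter_upwards with N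
    exact div_ratio_le hk N

noncomputable def mterm (d : ℕ) : ℝ := ((ArithmeticFunction.moebius (d + 1) : ℤ) : ℝ) / ((d : ℝ) + 1) ^ 3

private lemma summable_bound : Summable (fun d : ℕ => 1 / ((d : ℝ) + 1) ^ 3) := by
  have h : Summable (fun n : ℕ => 1 / (n : ℝ) ^ 3) := by
    rw [Real.summable_one_div_nat_pow]
    norm_num
  have := (summable_nat_add_iff 1).2 h
  refine this.congr fun n => ?_
  push_cast
  ring_nf

private lemma zeta3_pos : 0 < ∑' n : ℕ, 1 / ((n : ℝ) + 1) ^ 3 := by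
  refine Summable.tsum_pos summable_bound (fun n => by positivity) 0 (by norm_num)

/-- μ-sum equals inverse of zeta sum. -/
private lemma mterm_tsum : ∑' d : ℕ, mterm d = (∑' n : ℕ, 1 / ((n : ℝ) + 1) ^ 3)⁻¹ := by
  set z : ℝ := ∑' n : ℕ, 1 / ((n : ℝ) + 1) ^ 3 with hz
  have hs : (1 : ℝ) < (3 : ℂ).re := by norm_num
  have hsummu : LSeriesSummable (fun n => (ArithmeticFunction.moebius n : ℂ)) 3 :=
    ArithmeticFunction.LSeriesSummable_moebius_iff.2 hs
  -- LSeries of μ at 3 equals the complexification of our real sum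
  have hterm : ∀ n : ℕ, LSeries.term (fun n => (ArithmeticFunction.moebius n : ℂ)) 3 (n + 1)
      = ((mterm n : ℝ) : ℂ) := by
    intro n
    rw [LSeries.term_of_ne_zero (by omega)]
    have h3 : (3 : ℂ) = ((3 : ℕ) : ℂ) := by norm_num
    rw [h3, Complex.cpow_natCast]
    simp only [mterm]
    push_cast
    ring
  have hmu : LSeries (fun n => (ArithmeticFunction.moebius n : ℂ)) 3 = ((∑' d : ℕ, mterm d : ℝ) : ℂ) := by
    rw [LSeries, Summable.tsum_eq_zero_add hsummu]
    simp only [LSeries.term_zero, zero_add]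
    rw [Complex.ofReal_tsum]
    exact tsum_congr hterm
  -- riemannZeta 3 equals the complexification of z
  have hzeta : riemannZeta 3 = ((z : ℝ) : ℂ) := by
    rw [zeta_eq_tsum_one_div_nat_add_one_cpow (by norm_num), hz, Complex.ofReal_tsum]
    refine tsum_congr fun n => ?_
    have h3 : (3 : ℂ) = ((3 : ℕ) : ℂ) := by norm_num
    rw [h3, Complex.cpow_natCast]
    push_cast
    ring
  have hmul := ArithmeticFunction.LSeries_zeta_mul_Lseries_moebius hs
  rw [ArithmeticFunction.LSeries_zeta_eq_riemannZeta hs] at hmul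
  rw [hzeta, hmu] at hmul
  have hreal : z * (∑' d : ℕ, mterm d) = 1 := by
    exact_mod_cast hmul
  have hzne : z ≠ 0 := ne_of_gt zeta3_pos
  field_simp
  linarith [hreal]

/-- The natural density of relatively prime triples of positive integers equals
`1/ζ(3)`: the number of triples `(a, b, c)` with `1 ≤ a, b, c ≤ N` and
`gcd(a, b, c) = 1`, divided by `N³`, converges to the reciprocal of Apéry's constant
`ζ(3) = ∑_{n=1}^∞ 1/n³` as `N → ∞`. -/
theorem density_coprime_triples :
    Tendsto
      (fun N : ℕ =>
        (((Finset.Icc 1 N ×ˢ Finset.Icc 1 N ×ˢ Finset.Icc 1 N).filter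
            (fun t : ℕ × ℕ × ℕ => Nat.gcd t.1 (Nat.gcd t.2.1 t.2.2) = 1)).card : ℝ) /
          (N : ℝ) ^ 3)
      atTop (nhds (∑' n : ℕ, 1 / ((n : ℝ) + 1) ^ 3)⁻¹) := by
  rw [← mterm_tsum]
  set f : ℕ → ℕ → ℝ := fun N d =>
    ((ArithmeticFunction.moebius (d + 1) : ℤ) : ℝ) * (((N / (d + 1) : ℕ) : ℝ) / N) ^ 3 with hf
  have key : ∀ N : ℕ,
      (((Finset.Icc 1 N ×ˢ Finset.Icc 1 N ×ˢ Finset.Icc 1 N).filter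
          (fun t : ℕ × ℕ × ℕ => Nat.gcd t.1 (Nat.gcd t.2.1 t.2.2) = 1)).card : ℝ) / (N : ℝ) ^ 3
        = ∑' d : ℕ, f N d := by
    intro N
    have h1 : (((Finset.Icc 1 N ×ˢ Finset.Icc 1 N ×ˢ Finset.Icc 1 N).filter
        (fun t : ℕ × ℕ × ℕ => Nat.gcd t.1 (Nat.gcd t.2.1 t.2.2) = 1)).card : ℝ)
        = ∑ d ∈ Icc 1 N, ((ArithmeticFunction.moebius d : ℤ) : ℝ) * ((N / d : ℕ) : ℝ) ^ 3 := by
      have := count_eq N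
      have := congrArg (fun x : ℤ => (x : ℝ)) this
      push_cast at this
      convert this using 2
      rw [← Int.natCast_div, Int.cast_natCast]
    have h2 : (∑' d : ℕ, f N d) = ∑ d ∈ Finset.range N, f N d := by
      refine tsum_eq_sum fun d hd => ?_
      simp only [Finset.mem_range, not_lt] at hd
      have : N / (d + 1) = 0 := Nat.div_eq_of_lt (by omega)
      simp [hf, this]
    rw [h1, h2]
    have h3 : ∑ d ∈ Icc 1 N, ((ArithmeticFunction.moebius d : ℤ) : ℝ) * ((N / d : ℕ) : ℝ) ^ 3 / (N:ℝ)^3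
        = ∑ d ∈ Finset.range N, f N d := by
      have : Icc 1 N = Ico 1 (N + 1) := by rw [Finset.Ico_add_one_right_eq_Icc]
      rw [this, Finset.sum_Ico_eq_sum_range]
      simp only [Nat.add_sub_cancel]
      refine Finset.sum_congr rfl fun d hd => ?_
      simp only [hf]
      rw [div_pow, add_comm 1 d]
      ring
    rw [← h3, Finset.sum_div]
  simp only [key]
  have hgoal : ∀ d : ℕ, mterm d = ((ArithmeticFunction.moebius (d + 1) : ℤ) : ℝ) * (1 / ((d:ℝ)+1)) ^ 3 := by
    intro d
    simp only [mterm]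
    rw [div_pow]
    ring
  refine tendsto_tsum_of_dominated_convergence (f := f)
    (bound := fun d => 1 / ((d : ℝ) + 1) ^ 3) summable_bound ?_ ?_
  · intro d
    rw [hgoal d]
    have h := (tendsto_div_ratio (k := d + 1) (by omega)).pow 3
    have := h.const_mul (((ArithmeticFunction.moebius (d + 1) : ℤ) : ℝ))
    simp only [hf]
    convert this using 3 <;> push_cast <;> ring
  · filter_upwards with N d
    simp only [hf, Real.norm_eq_abs]
    rw [abs_mul, abs_pow]
    have hmu : |((ArithmeticFunction.moebius (d + 1) : ℤ) : ℝ)| ≤ 1 := by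
      have := ArithmeticFunction.abs_moebius_le_one (n := d + 1)
      exact_mod_cast this
    have hpos : 0 ≤ ((N / (d + 1) : ℕ) : ℝ) / N := by positivity
    have hle : ((N / (d + 1) : ℕ) : ℝ) / N ≤ 1 / ((d : ℝ) + 1) := by
      have := div_ratio_le (k := d + 1) (by omega) N
      convert this using 2
      push_cast
      ring
    have habs : |((N / (d + 1) : ℕ) : ℝ) / N| = ((N / (d + 1) : ℕ) : ℝ) / N := abs_of_nonneg hpos
    rw [habs]
    calc |((ArithmeticFunction.moebius (d + 1) : ℤ) : ℝ)| * (((N / (d + 1) : ℕ) : ℝ) / N) ^ 3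
        ≤ 1 * (1 / ((d : ℝ) + 1)) ^ 3 := by
          apply mul_le_mul hmu (pow_le_pow_left₀ hpos hle 3) (by positivity) (by norm_num)
      _ = 1 / ((d : ℝ) + 1) ^ 3 := by rw [one_mul, div_pow, one_pow]
end

section
/- For every integer m ≥ 2, the natural density of relatively prime m-tuples of positive integers equals 1/ζ(m): as N → ∞, the number of m-tuples (a₁,...,a_m) with 1 ≤ aᵢ ≤ N and gcd(a₁,...,a_m) = 1, divided by N^m, converges to ζ(m)^{-1}. -/
open Filter

open scoped ArithmeticFunction
open scoped ArithmeticFunction.Moebius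

private lemma count_eq_aux (m N : ℕ) (hm : 1 ≤ m) :
    ((((Fintype.piFinset fun _ : Fin m => Finset.Icc 1 N)).filter
        (fun a : Fin m → ℕ => Finset.univ.gcd a = 1)).card : ℤ) =
    ∑ d ∈ Finset.Icc 1 N, μ d * ((N / d : ℕ) : ℤ) ^ m := by
  classical
  have i0 : Fin m := ⟨0, hm⟩
  rw [Finset.card_filter]
  push_cast
  have key : ∀ a ∈ Fintype.piFinset (fun _ : Fin m => Finset.Icc 1 N),
      (if Finset.univ.gcd a = 1 then (1:ℤ) else 0) =
      ∑ d ∈ Finset.Icc 1 N, if d ∣ Finset.univ.gcd a then μ d else 0 := by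
    intro a ha
    have hmem : ∀ i, a i ∈ Finset.Icc 1 N := by
      simpa [Fintype.mem_piFinset] using ha
    obtain ⟨h1, h2⟩ := Finset.mem_Icc.mp (hmem i0)
    have hdvd0 : Finset.univ.gcd a ∣ a i0 := Finset.gcd_dvd (Finset.mem_univ i0)
    have hg0 : Finset.univ.gcd a ≠ 0 := by
      intro h; rw [h, zero_dvd_iff] at hdvd0; omega
    have hsub : (Finset.Icc 1 N).filter (· ∣ Finset.univ.gcd a)
        = (Finset.univ.gcd a).divisors := by
      ext d
      simp only [Nat.mem_divisors, Finset.mem_filter, Finset.mem_Icc]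
      constructor
      · rintro ⟨-, hd⟩; exact ⟨hd, hg0⟩
      · rintro ⟨hd, -⟩
        have hd' : d ∣ a i0 := hd.trans hdvd0
        have hd0 : d ≠ 0 := by rintro rfl; rw [zero_dvd_iff] at hd; exact hg0 hd
        exact ⟨⟨Nat.one_le_iff_ne_zero.mpr hd0,
          le_trans (Nat.le_of_dvd (by omega) hd') h2⟩, hd⟩
    rw [← Finset.sum_filter, hsub]
    have hz := ArithmeticFunction.coe_moebius_mul_coe_zeta (R := ℤ)
    have happ := congrArg (fun f : ArithmeticFunction ℤ => f (Finset.univ.gcd a)) hz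
    simp only [ArithmeticFunction.coe_mul_zeta_apply, ArithmeticFunction.one_apply,
      ArithmeticFunction.intCoe_apply, Int.cast_id] at happ
    rw [happ]
  rw [Finset.sum_congr rfl key, Finset.sum_comm]
  refine Finset.sum_congr rfl fun d hd => ?_
  rw [← Finset.sum_filter, Finset.sum_const]
  have hfil : (Fintype.piFinset fun _ : Fin m => Finset.Icc 1 N).filter
      (fun a => d ∣ Finset.univ.gcd a) =
      Fintype.piFinset fun _ : Fin m => (Finset.Icc 1 N).filter (d ∣ ·) := by
    ext a
    simp only [Finset.mem_filter, Fintype.mem_piFinset, Finset.dvd_gcd_iff,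
      Finset.mem_univ, forall_const]
    exact ⟨fun ⟨ha1, ha2⟩ i => ⟨ha1 i, ha2 i⟩, fun h => ⟨fun i => (h i).1, fun i => (h i).2⟩⟩
  rw [hfil, Fintype.card_piFinset]
  have hcard : ((Finset.Icc 1 N).filter (d ∣ ·)).card = N / d := by
    rw [show Finset.Icc 1 N = Finset.Ioc 0 N from by ext x; simp only [Finset.mem_Icc, Finset.mem_Ioc]; omega]
    exact Nat.Ioc_filter_dvd_card_eq_div N d
  simp only [hcard, Finset.prod_const, Finset.card_univ, Fintype.card_fin]
  rw [nsmul_eq_mul]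
  push_cast
  ring

/-- For every integer `m ≥ 2`, the natural density of relatively prime `m`-tuples of
positive integers equals `1/ζ(m)`: the number of `m`-tuples `(a₁, ..., a_m)` with
`1 ≤ aᵢ ≤ N` and `gcd(a₁, ..., a_m) = 1`, divided by `N^m`, converges to
`(∑_{n=1}^∞ 1/n^m)⁻¹` as `N → ∞`. -/
theorem density_coprime_tuples (m : ℕ) (hm : 2 ≤ m) :
    Tendsto
      (fun N : ℕ =>
        ((((Fintype.piFinset fun _ : Fin m => Finset.Icc 1 N)).filter
            (fun a : Fin m → ℕ => Finset.univ.gcd a = 1)).card : ℝ) / (N : ℝ) ^ m)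
      atTop (nhds (∑' n : ℕ, 1 / ((n : ℝ) + 1) ^ m)⁻¹) := by
  classical
  have hm1 : 1 ≤ m := by omega
  -- summability of the dominating series
  have hbsum : Summable (fun n : ℕ => 1 / ((n : ℝ) + 1) ^ m) := by
    refine ((summable_nat_add_iff 1).mpr ((Real.summable_one_div_nat_pow (p := m)).mpr (by omega))).congr fun n => ?_
    rw [Nat.cast_add, Nat.cast_one]
  -- the key identity : Moebius sum equals inverse of the zeta sum
  have hMZ : (∑' k : ℕ, (μ (k + 1) : ℝ) / ((k : ℝ) + 1) ^ m)
      = (∑' n : ℕ, 1 / ((n : ℝ) + 1) ^ m)⁻¹ := by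
    have hsre : 1 < ((m : ℂ)).re := by
      simp only [Complex.natCast_re]
      exact_mod_cast hm
    have hzsum : Summable (fun n : ℕ => if n = 0 then (0:ℝ) else 1 / (n : ℝ) ^ m) := by
      refine (summable_nat_add_iff 1).mp (hbsum.congr fun n => ?_)
      simp only [Nat.succ_ne_zero, if_false]
      rw [Nat.cast_add, Nat.cast_one]
    have hmusum : Summable (fun n : ℕ => if n = 0 then (0:ℝ) else (μ n : ℝ) / (n : ℝ) ^ m) := by
      refine Summable.of_norm_bounded hzsum fun n => ?_
      rcases eq_or_ne n 0 with rfl | hn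
      · simp
      · have h1 : (1:ℝ) ≤ (n:ℝ) := by exact_mod_cast Nat.one_le_iff_ne_zero.mpr hn
        simp only [if_neg hn, Real.norm_eq_abs, abs_div, abs_pow,
          abs_of_nonneg (by linarith : (0:ℝ) ≤ (n:ℝ))]
        refine (div_le_div_iff_of_pos_right (by positivity)).mpr ?_
        exact_mod_cast ArithmeticFunction.abs_moebius_le_one
    -- complex L-series values
    have hzL : LSeries (fun n => ((ArithmeticFunction.zeta n : ℕ) : ℂ)) (m : ℂ)
        = ((∑' n : ℕ, 1 / ((n : ℝ) + 1) ^ m : ℝ) : ℂ) := by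
      have hterm : ∀ n : ℕ, LSeries.term (fun k => ((ArithmeticFunction.zeta k : ℕ) : ℂ)) (m : ℂ) n
          = (((if n = 0 then (0:ℝ) else 1 / (n : ℝ) ^ m) : ℝ) : ℂ) := by
        intro n
        rcases eq_or_ne n 0 with rfl | hn
        · simp [LSeries.term]
        · rw [LSeries.term_of_ne_zero hn, ArithmeticFunction.zeta_apply_ne hn,
            Complex.cpow_natCast]
          simp only [if_neg hn]
          push_cast
          ring
      rw [LSeries, tsum_congr hterm, ← Complex.ofReal_tsum, Complex.ofReal_inj]
      rw [hzsum.tsum_eq_zero_add]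
      rw [if_pos rfl, zero_add]
      refine tsum_congr fun n => ?_
      simp only [Nat.succ_ne_zero, if_false]
      push_cast
      ring
    have hmuL : LSeries (fun n => ((μ n : ℤ) : ℂ)) (m : ℂ)
        = ((∑' k : ℕ, (μ (k + 1) : ℝ) / ((k : ℝ) + 1) ^ m : ℝ) : ℂ) := by
      have hterm : ∀ n : ℕ, LSeries.term (fun k => ((μ k : ℤ) : ℂ)) (m : ℂ) n
          = (((if n = 0 then (0:ℝ) else (μ n : ℝ) / (n : ℝ) ^ m) : ℝ) : ℂ) := by
        intro n
        rcases eq_or_ne n 0 with rfl | hn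
        · simp [LSeries.term]
        · rw [LSeries.term_of_ne_zero hn, Complex.cpow_natCast]
          simp only [if_neg hn]
          push_cast
          ring
      rw [LSeries, tsum_congr hterm, ← Complex.ofReal_tsum, Complex.ofReal_inj]
      rw [hmusum.tsum_eq_zero_add]
      rw [if_pos rfl, zero_add]
      refine tsum_congr fun n => ?_
      simp only [Nat.succ_ne_zero, if_false]
      push_cast
      ring
    have hmul := ArithmeticFunction.LSeries_zeta_mul_Lseries_moebius hsre
    rw [hzL, hmuL] at hmul
    have hmul' : (∑' n : ℕ, 1 / ((n : ℝ) + 1) ^ m)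
        * (∑' k : ℕ, (μ (k + 1) : ℝ) / ((k : ℝ) + 1) ^ m) = 1 := by
      exact_mod_cast hmul
    exact (inv_eq_of_mul_eq_one_right hmul').symm
  -- the N-dependent finite sums, as a tsum
  have hcount : ∀ N : ℕ,
      ((((Fintype.piFinset fun _ : Fin m => Finset.Icc 1 N)).filter
          (fun a : Fin m → ℕ => Finset.univ.gcd a = 1)).card : ℝ) / (N : ℝ) ^ m
      = ∑' k : ℕ, (μ (k + 1) : ℝ) * (((N / (k + 1) : ℕ) : ℝ) / (N : ℝ)) ^ m := by
    intro N
    have h1 : (∑' k : ℕ, (μ (k + 1) : ℝ) * (((N / (k + 1) : ℕ) : ℝ) / (N : ℝ)) ^ m)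
        = ∑ k ∈ Finset.range N, (μ (k + 1) : ℝ) * (((N / (k + 1) : ℕ) : ℝ) / (N : ℝ)) ^ m := by
      refine tsum_eq_sum fun k hk => ?_
      have hk' : N ≤ k := by simpa using hk
      have h0 : N / (k + 1) = 0 := Nat.div_eq_of_lt (by omega)
      rw [h0]
      simp only [Nat.cast_zero, zero_div, zero_pow (by omega : m ≠ 0), mul_zero]
    rw [h1]
    have h2 := count_eq_aux m N hm1
    have h3 : ((((Fintype.piFinset fun _ : Fin m => Finset.Icc 1 N)).filter
          (fun a : Fin m → ℕ => Finset.univ.gcd a = 1)).card : ℝ)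
        = ∑ d ∈ Finset.Icc 1 N, (μ d : ℝ) * ((N / d : ℕ) : ℝ) ^ m := by
      have h2' := congrArg (fun z : ℤ => (z : ℝ)) h2
      push_cast at h2'
      exact h2'
    rw [h3, show Finset.Icc 1 N = Finset.Ico 1 (N + 1) from by ext x; simp only [Finset.mem_Icc, Finset.mem_Ico]; omega,
      Finset.sum_Ico_eq_sum_range]
    simp only [Nat.add_sub_cancel]
    rw [Finset.sum_div]
    refine Finset.sum_congr rfl fun k hk => ?_
    rw [add_comm 1 k, div_pow, mul_div_assoc]
  -- pointwise limits
  have hlim : ∀ k : ℕ,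
      Tendsto (fun N : ℕ => (μ (k + 1) : ℝ) * (((N / (k + 1) : ℕ) : ℝ) / (N : ℝ)) ^ m)
        atTop (nhds ((μ (k + 1) : ℝ) / ((k : ℝ) + 1) ^ m)) := by
    intro k
    have hc : (0:ℝ) < (k : ℝ) + 1 := by positivity
    have hratio : Tendsto (fun N : ℕ => ((N / (k + 1) : ℕ) : ℝ) / (N : ℝ)) atTop
        (nhds (1 / ((k : ℝ) + 1))) := by
      have hlow : Tendsto (fun N : ℕ => 1 / ((k : ℝ) + 1) - 1 / (N : ℝ)) atTop
          (nhds (1 / ((k : ℝ) + 1))) := by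
        have h0 : Tendsto (fun N : ℕ => 1 / ((k : ℝ) + 1) - 1 / (N : ℝ)) atTop
            (nhds (1 / ((k : ℝ) + 1) - 0)) :=
          Tendsto.sub tendsto_const_nhds tendsto_one_div_atTop_nhds_zero_nat
        simpa using h0
      refine tendsto_of_tendsto_of_tendsto_of_le_of_le' hlow tendsto_const_nhds ?_ ?_
      · filter_upwards [eventually_ge_atTop 1] with N hN
        have hN' : (0:ℝ) < (N : ℝ) := by exact_mod_cast hN
        have hkey : (N : ℝ) ≤ ((k : ℝ) + 1) * (((N / (k + 1) : ℕ) : ℝ) + 1) := by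
          have hh1 : (k + 1) * (N / (k + 1)) + N % (k + 1) = N := Nat.div_add_mod N (k + 1)
          have hh2 : N % (k + 1) < k + 1 := Nat.mod_lt N k.succ_pos
          have hh3 : N ≤ (k + 1) * (N / (k + 1) + 1) := by
            rw [Nat.mul_add, Nat.mul_one]; omega
          exact_mod_cast hh3
        set q : ℝ := ((N / (k + 1) : ℕ) : ℝ) with hq
        have h4 : (0:ℝ) ≤ (((k : ℝ) + 1) * (q + 1) - N) / ((((k : ℝ) + 1)) * N) :=
          div_nonneg (by linarith) (by positivity)
        have h5 : (((k : ℝ) + 1) * (q + 1) - N) / ((((k : ℝ) + 1)) * N)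
            = q / N - (1 / ((k : ℝ) + 1) - 1 / N) := by
          field_simp
          ring
        rw [h5] at h4
        linarith
      · filter_upwards [eventually_ge_atTop 1] with N hN
        have hN' : (0:ℝ) < (N : ℝ) := by exact_mod_cast hN
        have hub : ((N / (k + 1) : ℕ) : ℝ) ≤ (N : ℝ) / ((k : ℝ) + 1) := by
          have := Nat.cast_div_le (α := ℝ) (m := N) (n := k + 1)
          push_cast at this
          exact this
        calc ((N / (k + 1) : ℕ) : ℝ) / (N : ℝ) ≤ ((N : ℝ) / ((k : ℝ) + 1)) / (N : ℝ) :=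
              (div_le_div_iff_of_pos_right hN').mpr hub
          _ = 1 / ((k : ℝ) + 1) := by field_simp
    have := (hratio.pow m).const_mul ((μ (k + 1) : ℝ))
    simpa [div_pow, mul_one_div, div_eq_mul_inv] using this
  -- uniform bound
  have hbound : ∀ᶠ N : ℕ in atTop, ∀ k : ℕ,
      ‖(μ (k + 1) : ℝ) * (((N / (k + 1) : ℕ) : ℝ) / (N : ℝ)) ^ m‖ ≤ 1 / ((k : ℝ) + 1) ^ m := by
    filter_upwards [eventually_ge_atTop 1] with N hN k
    have hc : (0:ℝ) < (k : ℝ) + 1 := by positivity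
    have hN' : (0:ℝ) < (N : ℝ) := by exact_mod_cast hN
    have hub : ((N / (k + 1) : ℕ) : ℝ) / (N : ℝ) ≤ 1 / ((k : ℝ) + 1) := by
      have h6 : ((N / (k + 1) : ℕ) : ℝ) ≤ (N : ℝ) / ((k : ℝ) + 1) := by
        have := Nat.cast_div_le (α := ℝ) (m := N) (n := k + 1)
        push_cast at this
        exact this
      calc ((N / (k + 1) : ℕ) : ℝ) / (N : ℝ) ≤ ((N : ℝ) / ((k : ℝ) + 1)) / (N : ℝ) :=
            (div_le_div_iff_of_pos_right hN').mpr h6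
        _ = 1 / ((k : ℝ) + 1) := by field_simp
    have hq0 : (0:ℝ) ≤ ((N / (k + 1) : ℕ) : ℝ) / (N : ℝ) := by positivity
    rw [Real.norm_eq_abs, abs_mul, abs_pow, abs_of_nonneg hq0]
    have hmu : |(μ (k + 1) : ℝ)| ≤ 1 := by
      exact_mod_cast ArithmeticFunction.abs_moebius_le_one
    calc |(μ (k + 1) : ℝ)| * (((N / (k + 1) : ℕ) : ℝ) / (N : ℝ)) ^ m
        ≤ 1 * (1 / ((k : ℝ) + 1)) ^ m :=
          mul_le_mul hmu (pow_le_pow_left₀ hq0 hub m) (by positivity) zero_le_one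
      _ = 1 / ((k : ℝ) + 1) ^ m := by rw [one_mul, div_pow, one_pow]
  have hT := tendsto_tsum_of_dominated_convergence hbsum hlim hbound
  rw [hMZ] at hT
  exact hT.congr fun N => (hcount N).symm
end
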